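/- The fan-beam projection of the unit square pixel basis, computed along the full line through source p with direction v(s), equals the evaluation of a 2-direction box spline whose directions are the projections of the square's edges onto the line orthogonal to v(s): ∫_ℝ 1_{[0,1)²}(p + t·v) dt = Δ_{ζ₁} Δ_{ζ₂} (s')₊ / |ζ₁ ζ₂| where ζᵢ = ⟨eᵢ, v⊥⟩ (e₁ = (1,0), e₂ = (0,1)), s' = ⟨p, v⊥⟩, assuming ζ₁, ζ₂ ≠ 0. -/

import Mathlib

open MeasureTheory

/-- Truncated power `(s)₊ = max(s, 0)`. -/
noncomputable def truncPos (s : ℝ) : ℝ := max s 0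

set_option maxHeartbeats 2000000 in
lemma key_aux (l₁ u₁ l₂ u₂ : ℝ) (h₁ : l₁ ≤ u₁) (h₂ : l₂ ≤ u₂) :
    max (min u₁ u₂ - max l₁ l₂) 0 =
      |max (l₂ - l₁) 0 - max (l₂ - u₁) 0 - max (u₂ - l₁) 0 + max (u₂ - u₁) 0| := by
  have habs : ∀ x : ℝ, |x| = if 0 ≤ x then x else -x := fun x => by
    rcases le_or_gt 0 x with h | h
    · rw [abs_of_nonneg h, if_pos h]
    · rw [abs_of_neg h, if_neg (not_le.2 h)]
  simp only [habs, max_def, min_def]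
  split_ifs <;> linarith

lemma key_c (c l₁ u₁ l₂ u₂ : ℝ) (hc : 0 < c) (h₁ : l₁ ≤ u₁) (h₂ : l₂ ≤ u₂) :
    max (min u₁ u₂ - max l₁ l₂) 0 =
      |truncPos (c * (l₂ - l₁)) - truncPos (c * (l₂ - u₁)) - truncPos (c * (u₂ - l₁))
        + truncPos (c * (u₂ - u₁))| / c := by
  have ht : ∀ x : ℝ, truncPos (c * x) = c * max x 0 := fun x => by
    simp [truncPos, mul_max_of_nonneg _ _ hc.le]
  simp only [ht]
  have h3 : c * max (l₂ - l₁) 0 - c * max (l₂ - u₁) 0 - c * max (u₂ - l₁) 0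
      + c * max (u₂ - u₁) 0
      = c * (max (l₂ - l₁) 0 - max (l₂ - u₁) 0 - max (u₂ - l₁) 0 + max (u₂ - u₁) 0) := by ring
  rw [h3, abs_mul, abs_of_pos hc, mul_div_cancel_left₀ _ hc.ne', key_aux l₁ u₁ l₂ u₂ h₁ h₂]

lemma integral_eq_aux (p v : ℝ × ℝ) (a b : ℝ)
    (hsub1 : ∀ t : ℝ, a < t → t < b → p + t • v ∈ Set.Ico (0:ℝ) 1 ×ˢ Set.Ico (0:ℝ) 1)
    (hsub2 : ∀ t : ℝ, p + t • v ∈ Set.Ico (0:ℝ) 1 ×ˢ Set.Ico (0:ℝ) 1 → a ≤ t ∧ t ≤ b) :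
    (∫ t : ℝ, (Set.Ico (0:ℝ) 1 ×ˢ Set.Ico (0:ℝ) 1).indicator (fun _ => (1:ℝ)) (p + t • v))
      = max (b - a) 0 := by
  set S : Set ℝ := (fun t : ℝ => p + t • v) ⁻¹' (Set.Ico (0:ℝ) 1 ×ˢ Set.Ico (0:ℝ) 1) with hS
  have hcont : Continuous fun t : ℝ => p + t • v := by continuity
  have hmeas : MeasurableSet S :=
    hcont.measurable (MeasurableSet.prod measurableSet_Ico measurableSet_Ico)
  have heq : (fun t : ℝ =>
      (Set.Ico (0:ℝ) 1 ×ˢ Set.Ico (0:ℝ) 1).indicator (fun _ => (1:ℝ)) (p + t • v))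
      = S.indicator 1 := by
    funext t
    by_cases h : p + t • v ∈ Set.Ico (0:ℝ) 1 ×ˢ Set.Ico (0:ℝ) 1 <;>
      simp [hS, Set.indicator, h]
  rw [heq, MeasureTheory.integral_indicator_one hmeas]
  have hvol : volume S = ENNReal.ofReal (b - a) := by
    apply le_antisymm
    · calc volume S ≤ volume (Set.Icc a b) :=
            measure_mono (fun t ht => Set.mem_Icc.2 (hsub2 t ht))
        _ = ENNReal.ofReal (b - a) := Real.volume_Icc
    · calc ENNReal.ofReal (b - a) = volume (Set.Ioo a b) := Real.volume_Ioo.symm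
        _ ≤ volume S := measure_mono (fun t ht => hsub1 t ht.1 ht.2)
  rw [measureReal_def, hvol]
  rcases le_total (b - a) 0 with h | h
  · simp [ENNReal.ofReal_eq_zero.2 h, max_eq_right h]
  · rw [ENNReal.toReal_ofReal h, max_eq_left h]

lemma mem_iff_pos (x w t : ℝ) (hw : 0 < w) :
    (0 ≤ x + t * w ∧ x + t * w < 1) ↔ (-x / w ≤ t ∧ t < (1 - x) / w) := by
  rw [div_le_iff₀ hw, lt_div_iff₀ hw]
  constructor <;> rintro ⟨hh1, hh2⟩ <;> exact ⟨by linarith, by linarith⟩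

lemma mem_iff_neg (x w t : ℝ) (hw : w < 0) :
    (0 ≤ x + t * w ∧ x + t * w < 1) ↔ ((1 - x) / w < t ∧ t ≤ -x / w) := by
  rw [div_lt_iff_of_neg hw, le_div_iff_of_neg hw]
  constructor <;> rintro ⟨hh1, hh2⟩ <;> exact ⟨by linarith, by linarith⟩

lemma mem_sq_iff (p v : ℝ × ℝ) (t : ℝ) :
    p + t • v ∈ Set.Ico (0:ℝ) 1 ×ˢ Set.Ico (0:ℝ) 1 ↔
      ((0 ≤ p.1 + t * v.1 ∧ p.1 + t * v.1 < 1) ∧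
       (0 ≤ p.2 + t * v.2 ∧ p.2 + t * v.2 < 1)) := by
  simp [Set.mem_prod, Set.mem_Ico, Prod.fst_add, Prod.snd_add, smul_eq_mul]

lemma div_pair_pos (x w : ℝ) (hw : 0 < w) : -x / w ≤ (1 - x) / w := by
  have h : (1 - x) / w - -x / w = 1 / w := by ring
  have h2 : 0 < 1 / w := one_div_pos.2 hw
  linarith

lemma div_pair_neg (x w : ℝ) (hw : w < 0) : (1 - x) / w ≤ -x / w := by
  have h : -x / w - (1 - x) / w = -(1 / w) := by ring
  have h2 : 1 / w < 0 := one_div_neg.2 hw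
  linarith

/-- the fan-beam projection of the unit-square pixel basis along
the full line through `p` with unit direction `v` equals the evaluation of a
2-direction box spline: with `v⊥ = (v₂, −v₁)`, `ζᵢ = ⟨eᵢ, v⊥⟩`,
`s' = ⟨p, v⊥⟩`, it equals `|Δ_{ζ₁} Δ_{ζ₂} (s')₊| / |ζ₁ ζ₂|`. -/
theorem fanbeam_pixel_eq_box_spline
    (v : ℝ × ℝ) (hv : v.1 ^ 2 + v.2 ^ 2 = 1)
    (p : ℝ × ℝ)
    (ζ₁ ζ₂ s' : ℝ)
    (hζ₁ : ζ₁ = v.2) (hζ₂ : ζ₂ = -v.1)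
    (h₁ : ζ₁ ≠ 0) (h₂ : ζ₂ ≠ 0)
    (hs' : s' = p.1 * v.2 - p.2 * v.1) :
    (∫ t : ℝ, (Set.Ico (0:ℝ) 1 ×ˢ Set.Ico (0:ℝ) 1).indicator (fun _ => (1:ℝ))
        (p + t • v)) =
      |truncPos s' - truncPos (s' - ζ₁) - truncPos (s' - ζ₂)
          + truncPos (s' - ζ₁ - ζ₂)| / |ζ₁ * ζ₂| := by
  subst hζ₁ hζ₂ hs'
  have hv1 : v.1 ≠ 0 := fun h => h₂ (by rw [h, neg_zero])
  have hv2 : v.2 ≠ 0 := h₁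
  rcases hv1.lt_or_gt with hv1' | hv1' <;> rcases hv2.lt_or_gt with hv2' | hv2'
  · -- v.1 < 0, v.2 < 0
    have hc : 0 < v.1 * v.2 := mul_pos_of_neg_of_neg hv1' hv2'
    rw [integral_eq_aux p v (max ((1 - p.1) / v.1) ((1 - p.2) / v.2))
        (min (-p.1 / v.1) (-p.2 / v.2))
        (fun t ht1 ht2 => by
          rw [mem_sq_iff]
          obtain ⟨ha1, ha2⟩ := max_lt_iff.1 ht1
          obtain ⟨hb1, hb2⟩ := lt_min_iff.1 ht2
          exact ⟨(mem_iff_neg _ _ _ hv1').2 ⟨ha1, hb1.le⟩,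
                 (mem_iff_neg _ _ _ hv2').2 ⟨ha2, hb2.le⟩⟩)
        (fun t ht => by
          rw [mem_sq_iff] at ht
          obtain ⟨hc1a, hc1b⟩ := (mem_iff_neg _ _ _ hv1').1 ht.1
          obtain ⟨hc2a, hc2b⟩ := (mem_iff_neg _ _ _ hv2').1 ht.2
          exact ⟨max_le hc1a.le hc2a.le, le_min hc1b hc2b⟩)]
    rw [key_c (v.1 * v.2) ((1 - p.1) / v.1) (-p.1 / v.1) ((1 - p.2) / v.2) (-p.2 / v.2)
        hc (div_pair_neg _ _ hv1') (div_pair_neg _ _ hv2')]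
    have e0 : v.1 * v.2 * ((1 - p.2) / v.2 - (1 - p.1) / v.1)
        = p.1 * v.2 - p.2 * v.1 - v.2 - -v.1 := by field_simp; ring
    have e1 : v.1 * v.2 * ((1 - p.2) / v.2 - -p.1 / v.1)
        = p.1 * v.2 - p.2 * v.1 - -v.1 := by field_simp; ring
    have e2 : v.1 * v.2 * (-p.2 / v.2 - (1 - p.1) / v.1)
        = p.1 * v.2 - p.2 * v.1 - v.2 := by field_simp; ring
    have e3 : v.1 * v.2 * (-p.2 / v.2 - -p.1 / v.1)
        = p.1 * v.2 - p.2 * v.1 := by field_simp; ring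
    rw [e0, e1, e2, e3]
    rw [show v.2 * -v.1 = -(v.1 * v.2) by ring, abs_neg, abs_of_pos hc]
    congr 1
    rw [show truncPos (p.1 * v.2 - p.2 * v.1 - v.2 - -v.1)
          - truncPos (p.1 * v.2 - p.2 * v.1 - -v.1)
          - truncPos (p.1 * v.2 - p.2 * v.1 - v.2)
          + truncPos (p.1 * v.2 - p.2 * v.1)
        = truncPos (p.1 * v.2 - p.2 * v.1)
          - truncPos (p.1 * v.2 - p.2 * v.1 - v.2)
          - truncPos (p.1 * v.2 - p.2 * v.1 - -v.1)
          + truncPos (p.1 * v.2 - p.2 * v.1 - v.2 - -v.1) by ring]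
  · -- v.1 < 0, 0 < v.2
    have hc : 0 < -(v.1 * v.2) := neg_pos.2 (mul_neg_of_neg_of_pos hv1' hv2')
    rw [integral_eq_aux p v (max (-p.2 / v.2) ((1 - p.1) / v.1))
        (min ((1 - p.2) / v.2) (-p.1 / v.1))
        (fun t ht1 ht2 => by
          rw [mem_sq_iff]
          obtain ⟨ha2, ha1⟩ := max_lt_iff.1 ht1
          obtain ⟨hb2, hb1⟩ := lt_min_iff.1 ht2
          exact ⟨(mem_iff_neg _ _ _ hv1').2 ⟨ha1, hb1.le⟩,
                 (mem_iff_pos _ _ _ hv2').2 ⟨ha2.le, hb2⟩⟩)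
        (fun t ht => by
          rw [mem_sq_iff] at ht
          obtain ⟨hc1a, hc1b⟩ := (mem_iff_neg _ _ _ hv1').1 ht.1
          obtain ⟨hc2a, hc2b⟩ := (mem_iff_pos _ _ _ hv2').1 ht.2
          exact ⟨max_le hc2a hc1a.le, le_min hc2b.le hc1b⟩)]
    rw [key_c (-(v.1 * v.2)) (-p.2 / v.2) ((1 - p.2) / v.2) ((1 - p.1) / v.1) (-p.1 / v.1)
        hc (div_pair_pos _ _ hv2') (div_pair_neg _ _ hv1')]
    have e0 : -(v.1 * v.2) * ((1 - p.1) / v.1 - -p.2 / v.2)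
        = p.1 * v.2 - p.2 * v.1 - v.2 := by field_simp; ring
    have e1 : -(v.1 * v.2) * ((1 - p.1) / v.1 - (1 - p.2) / v.2)
        = p.1 * v.2 - p.2 * v.1 - v.2 - -v.1 := by field_simp; ring
    have e2 : -(v.1 * v.2) * (-p.1 / v.1 - -p.2 / v.2)
        = p.1 * v.2 - p.2 * v.1 := by field_simp; ring
    have e3 : -(v.1 * v.2) * (-p.1 / v.1 - (1 - p.2) / v.2)
        = p.1 * v.2 - p.2 * v.1 - -v.1 := by field_simp; ring
    rw [e0, e1, e2, e3]
    rw [show v.2 * -v.1 = -(v.1 * v.2) by ring, abs_of_pos hc]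
    congr 1
    rw [show truncPos (p.1 * v.2 - p.2 * v.1 - v.2)
          - truncPos (p.1 * v.2 - p.2 * v.1 - v.2 - -v.1)
          - truncPos (p.1 * v.2 - p.2 * v.1)
          + truncPos (p.1 * v.2 - p.2 * v.1 - -v.1)
        = -(truncPos (p.1 * v.2 - p.2 * v.1)
          - truncPos (p.1 * v.2 - p.2 * v.1 - v.2)
          - truncPos (p.1 * v.2 - p.2 * v.1 - -v.1)
          + truncPos (p.1 * v.2 - p.2 * v.1 - v.2 - -v.1)) by ring, abs_neg]
  · -- 0 < v.1, v.2 < 0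
    have hc : 0 < -(v.1 * v.2) := neg_pos.2 (mul_neg_of_pos_of_neg hv1' hv2')
    rw [integral_eq_aux p v (max ((1 - p.2) / v.2) (-p.1 / v.1))
        (min (-p.2 / v.2) ((1 - p.1) / v.1))
        (fun t ht1 ht2 => by
          rw [mem_sq_iff]
          obtain ⟨ha2, ha1⟩ := max_lt_iff.1 ht1
          obtain ⟨hb2, hb1⟩ := lt_min_iff.1 ht2
          exact ⟨(mem_iff_pos _ _ _ hv1').2 ⟨ha1.le, hb1⟩,
                 (mem_iff_neg _ _ _ hv2').2 ⟨ha2, hb2.le⟩⟩)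
        (fun t ht => by
          rw [mem_sq_iff] at ht
          obtain ⟨hc1a, hc1b⟩ := (mem_iff_pos _ _ _ hv1').1 ht.1
          obtain ⟨hc2a, hc2b⟩ := (mem_iff_neg _ _ _ hv2').1 ht.2
          exact ⟨max_le hc2a.le hc1a, le_min hc2b hc1b.le⟩)]
    rw [key_c (-(v.1 * v.2)) ((1 - p.2) / v.2) (-p.2 / v.2) (-p.1 / v.1) ((1 - p.1) / v.1)
        hc (div_pair_neg _ _ hv2') (div_pair_pos _ _ hv1')]
    have e0 : -(v.1 * v.2) * (-p.1 / v.1 - (1 - p.2) / v.2)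
        = p.1 * v.2 - p.2 * v.1 - -v.1 := by field_simp; ring
    have e1 : -(v.1 * v.2) * (-p.1 / v.1 - -p.2 / v.2)
        = p.1 * v.2 - p.2 * v.1 := by field_simp; ring
    have e2 : -(v.1 * v.2) * ((1 - p.1) / v.1 - (1 - p.2) / v.2)
        = p.1 * v.2 - p.2 * v.1 - v.2 - -v.1 := by field_simp; ring
    have e3 : -(v.1 * v.2) * ((1 - p.1) / v.1 - -p.2 / v.2)
        = p.1 * v.2 - p.2 * v.1 - v.2 := by field_simp; ring
    rw [e0, e1, e2, e3]
    rw [show v.2 * -v.1 = -(v.1 * v.2) by ring, abs_of_pos hc]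
    congr 1
    rw [show truncPos (p.1 * v.2 - p.2 * v.1 - -v.1)
          - truncPos (p.1 * v.2 - p.2 * v.1)
          - truncPos (p.1 * v.2 - p.2 * v.1 - v.2 - -v.1)
          + truncPos (p.1 * v.2 - p.2 * v.1 - v.2)
        = -(truncPos (p.1 * v.2 - p.2 * v.1)
          - truncPos (p.1 * v.2 - p.2 * v.1 - v.2)
          - truncPos (p.1 * v.2 - p.2 * v.1 - -v.1)
          + truncPos (p.1 * v.2 - p.2 * v.1 - v.2 - -v.1)) by ring, abs_neg]
  · -- 0 < v.1, 0 < v.2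
    have hc : 0 < v.1 * v.2 := mul_pos hv1' hv2'
    rw [integral_eq_aux p v (max (-p.1 / v.1) (-p.2 / v.2))
        (min ((1 - p.1) / v.1) ((1 - p.2) / v.2))
        (fun t ht1 ht2 => by
          rw [mem_sq_iff]
          obtain ⟨ha1, ha2⟩ := max_lt_iff.1 ht1
          obtain ⟨hb1, hb2⟩ := lt_min_iff.1 ht2
          exact ⟨(mem_iff_pos _ _ _ hv1').2 ⟨ha1.le, hb1⟩,
                 (mem_iff_pos _ _ _ hv2').2 ⟨ha2.le, hb2⟩⟩)
        (fun t ht => by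
          rw [mem_sq_iff] at ht
          obtain ⟨hc1a, hc1b⟩ := (mem_iff_pos _ _ _ hv1').1 ht.1
          obtain ⟨hc2a, hc2b⟩ := (mem_iff_pos _ _ _ hv2').1 ht.2
          exact ⟨max_le hc1a hc2a, le_min hc1b.le hc2b.le⟩)]
    rw [key_c (v.1 * v.2) (-p.1 / v.1) ((1 - p.1) / v.1) (-p.2 / v.2) ((1 - p.2) / v.2)
        hc (div_pair_pos _ _ hv1') (div_pair_pos _ _ hv2')]
    have e0 : v.1 * v.2 * (-p.2 / v.2 - -p.1 / v.1)
        = p.1 * v.2 - p.2 * v.1 := by field_simp; ring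
    have e1 : v.1 * v.2 * (-p.2 / v.2 - (1 - p.1) / v.1)
        = p.1 * v.2 - p.2 * v.1 - v.2 := by field_simp; ring
    have e2 : v.1 * v.2 * ((1 - p.2) / v.2 - -p.1 / v.1)
        = p.1 * v.2 - p.2 * v.1 - -v.1 := by field_simp; ring
    have e3 : v.1 * v.2 * ((1 - p.2) / v.2 - (1 - p.1) / v.1)
        = p.1 * v.2 - p.2 * v.1 - v.2 - -v.1 := by field_simp; ring
    rw [e0, e1, e2, e3]
    rw [show v.2 * -v.1 = -(v.1 * v.2) by ring, abs_neg, abs_of_pos hc]
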